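/- In the ring A = ℂ[x,y,z]/(x² + y² + z² − z), with λ(a) = (1−2z)x, λ(b) = (1−3z)y, λ(c) = (1−z)z, and w = −(9/4)λ(a)² + 9z²λ(c) − (9/4)λ(c), the identity (5/12)y² + (5/6)λ(b)y + 2λ(b)(1−2z)y + (9/2)λ(a)² + (1−2z)w − (1−2z)λ(b)² = 0 holds; in particular y is integral over the subring ℂ[λ(a), λ(b), λ(c), z] ⊆ A. -/

import Mathlib

set_option maxHeartbeats 2000000
set_option synthInstance.maxHeartbeats 400000

open MvPolynomial

/-- The coordinate ring `A = ℂ[x,y,z]/(x² + y² + z² − z)` of the sphere. -/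
abbrev sphereRing : Type :=
  MvPolynomial (Fin 3) ℂ ⧸
    Ideal.span {(X 0 ^ 2 + X 1 ^ 2 + X 2 ^ 2 - X 2 : MvPolynomial (Fin 3) ℂ)}

noncomputable abbrev sx : sphereRing := Ideal.Quotient.mk _ (X 0)
noncomputable abbrev sy : sphereRing := Ideal.Quotient.mk _ (X 1)
noncomputable abbrev sz : sphereRing := Ideal.Quotient.mk _ (X 2)

/-- `λ(a) = (1−2z)x`, `λ(b) = (1−3z)y`, `λ(c) = (1−z)z` in `A`. -/
noncomputable abbrev la : sphereRing := (1 - 2 * sz) * sx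
noncomputable abbrev lb : sphereRing := (1 - 3 * sz) * sy
noncomputable abbrev lc : sphereRing := (1 - sz) * sz

/-- `w = −(9/4)λ(a)² + 9z²λ(c) − (9/4)λ(c)`. -/
noncomputable abbrev wElt : sphereRing :=
  -(9 / 4 : ℂ) • la ^ 2 + (9 : ℂ) • (sz ^ 2 * lc) - (9 / 4 : ℂ) • lc

/-- The identity
`(5/12)y² + (5/6)λ(b)y + 2λ(b)(1−2z)y + (9/2)λ(a)² + (1−2z)w − (1−2z)λ(b)² = 0`
holds in `A`; in particular `y` is integral over `ℂ[λ(a), λ(b), λ(c), z]`. -/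
theorem sy_integral :
    (5 / 12 : ℂ) • sy ^ 2 + (5 / 6 : ℂ) • (lb * sy) + 2 * lb * (1 - 2 * sz) * sy +
        (9 / 2 : ℂ) • la ^ 2 + (1 - 2 * sz) * wElt - (1 - 2 * sz) * lb ^ 2 = 0 ∧
      IsIntegral (Algebra.adjoin ℂ ({la, lb, lc, sz} : Set sphereRing)) sy := by
  have hg : sx ^ 2 + sy ^ 2 + sz ^ 2 - sz = 0 := by
    have h : (Ideal.Quotient.mk (Ideal.span {(X 0 ^ 2 + X 1 ^ 2 + X 2 ^ 2 - X 2 : MvPolynomial (Fin 3) ℂ)}))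
        (X 0 ^ 2 + X 1 ^ 2 + X 2 ^ 2 - X 2) = 0 :=
      Ideal.Quotient.eq_zero_iff_mem.mpr (Ideal.subset_span rfl)
    rw [map_sub, map_add, map_add, map_pow, map_pow, map_pow] at h
    exact h
  set φ : ℂ →+* sphereRing := algebraMap ℂ sphereRing with hφ
  have cancel : ∀ (c : ℂ) (v : sphereRing), c ≠ 0 → φ c * v = 0 → v = 0 := by
    intro c v hc h
    have h1 : φ c⁻¹ * (φ c * v) = v := by
      rw [← mul_assoc, ← map_mul, inv_mul_cancel₀ hc, map_one, one_mul]
    rw [h, mul_zero] at h1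
    exact h1.symm
  have sdef : ∀ (c : ℂ) (v : sphereRing), c • v = φ c * v :=
    fun c v => Algebra.smul_def c v
  have h12 : φ 12 = 12 := map_ofNat φ 12
  have h5 : φ 5 = 5 := map_ofNat φ 5
  have e1 : 12 * φ (5/12) = 5 := by rw [← h12, ← h5, ← map_mul]; norm_num
  have e2 : 12 * φ (5/6) = 10 := by rw [← h12, ← map_ofNat φ 10, ← map_mul]; norm_num
  have e3 : 12 * φ (9/2) = 54 := by rw [← h12, ← map_ofNat φ 54, ← map_mul]; norm_num
  have e4 : 12 * φ (9/4) = 27 := by rw [← h12, ← map_ofNat φ 27, ← map_mul]; norm_num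
  have k1 : 5 * φ (24/5) = 24 := by rw [← h5, ← map_ofNat φ 24, ← map_mul]; norm_num
  have k2 : 5 * φ (12/5) = 12 := by rw [← h5, ← h12, ← map_mul]; norm_num
  have key : (5 / 12 : ℂ) • sy ^ 2 + (5 / 6 : ℂ) • (lb * sy) + 2 * lb * (1 - 2 * sz) * sy +
      (9 / 2 : ℂ) • la ^ 2 + (1 - 2 * sz) * wElt - (1 - 2 * sz) * lb ^ 2 = 0 := by
    apply cancel 12 _ (by norm_num)
    rw [h12]
    simp only [wElt, neg_smul, sdef, map_neg, map_ofNat]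
    linear_combination (216 * sz ^ 3 - 108 * sz ^ 2 - 54 * sz + 27) * hg
      + sy ^ 2 * e1 + (lb * sy) * e2 + la ^ 2 * e3 - ((1 - 2 * sz) * (la ^ 2 + lc)) * e4
  refine ⟨key, ?_⟩
  set R := Algebra.adjoin ℂ ({la, lb, lc, sz} : Set sphereRing) with hR
  have hla : la ∈ R := Algebra.subset_adjoin (by simp)
  have hlb : lb ∈ R := Algebra.subset_adjoin (by simp)
  have hlc : lc ∈ R := Algebra.subset_adjoin (by simp)
  have hsz : sz ∈ R := Algebra.subset_adjoin (by simp)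
  have h2R : (2 : sphereRing) ∈ R := by
    have h1 := (one_mem R)
    have := add_mem h1 h1
    rw [one_add_one_eq_two] at this
    exact this
  have hu : (1 - 2 * sz) ∈ R := sub_mem (one_mem R) (mul_mem h2R hsz)
  have hw : wElt ∈ R :=
    sub_mem (add_mem (Subalgebra.smul_mem R (pow_mem hla 2) _)
      (Subalgebra.smul_mem R (mul_mem (pow_mem hsz 2) hlc) _))
      (Subalgebra.smul_mem R hlc _)
  set c1 : sphereRing := 2 * lb + (24/5 : ℂ) • (lb * (1 - 2 * sz)) with hc1
  set c0 : sphereRing := (12/5 : ℂ) • ((9/2 : ℂ) • la ^ 2 + (1 - 2 * sz) * wElt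
    - (1 - 2 * sz) * lb ^ 2) with hc0
  have hc1R : c1 ∈ R :=
    add_mem (mul_mem h2R hlb) (Subalgebra.smul_mem R (mul_mem hlb hu) _)
  have hc0R : c0 ∈ R :=
    Subalgebra.smul_mem R (sub_mem (add_mem (Subalgebra.smul_mem R (pow_mem hla 2) _)
      (mul_mem hu hw)) (mul_mem hu (pow_mem hlb 2))) _
  have hquad : sy ^ 2 + c1 * sy + c0 = 0 := by
    apply cancel 5 _ (by norm_num)
    rw [h5, hc1, hc0]
    simp only [wElt, neg_smul, sdef, map_neg, map_ofNat]
    linear_combination (216 * sz ^ 3 - 108 * sz ^ 2 - 54 * sz + 27) * hg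
      + (lb * (1 - 2 * sz) * sy) * k1
      + (φ (9/2) * la ^ 2 + (1 - 2 * sz) * (-(φ (9/4)) * la ^ 2 + 9 * (sz ^ 2 * lc)
          - φ (9/4) * lc) - (1 - 2 * sz) * lb ^ 2) * k2
      + la ^ 2 * e3 - ((1 - 2 * sz) * (la ^ 2 + lc)) * e4
  refine ⟨Polynomial.X ^ 2 + Polynomial.C (⟨c1, hc1R⟩ : R) * Polynomial.X
    + Polynomial.C (⟨c0, hc0R⟩ : R), ?_, ?_⟩
  · have : (Polynomial.X ^ 2 + Polynomial.C (⟨c1, hc1R⟩ : R) * Polynomial.X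
        + Polynomial.C (⟨c0, hc0R⟩ : R))
        = Polynomial.X ^ (1 + 1) + (Polynomial.C (⟨c1, hc1R⟩ : R) * Polynomial.X
          + Polynomial.C (⟨c0, hc0R⟩ : R)) := by ring
    rw [this]
    refine Polynomial.monic_X_pow_add ?_
    exact lt_of_le_of_lt Polynomial.degree_linear_le (by norm_num)
  · simp only [Polynomial.eval₂_add, Polynomial.eval₂_mul, Polynomial.eval₂_pow,
      Polynomial.eval₂_X, Polynomial.eval₂_C]
    simpa using hquad
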